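/- Suppose −1 ≤ α ≤ β ≤ 1 with α > −1 or β < 1, and 1 + nαβ ≥ 0. Let Ē_{αβ} := { y ∈ E : −a_jᵀy ≤ −a_jᵀȳ + αγ_j or −a_jᵀy ≥ −a_jᵀȳ + βγ_j }, where E := {y ∈ ℝⁿ : (y−ȳ)ᵀ(ADAᵀ)(y−ȳ) ≤ 1} and γ_j := sqrt(a_jᵀBa_j). Then every ellipsoid (image of the closed Euclidean unit ball of ℝⁿ under an invertible affine map) containing Ē_{αβ} has Lebesgue volume at least that of E; that is, E is a minimum-volume ellipsoid containing Ē_{αβ}. -/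

import Mathlib

open Matrix MeasureTheory

/-- An ellipsoid in `ℝⁿ` is the image of the closed Euclidean unit ball under an
invertible affine map. -/
def IsEllipsoid {n : ℕ} (S : Set (Fin n → ℝ)) : Prop :=
  ∃ (M : Matrix (Fin n) (Fin n) ℝ) (c : Fin n → ℝ),
    IsUnit M ∧ S = (fun x => M *ᵥ x + c) '' {x : Fin n → ℝ | x ⬝ᵥ x ≤ 1}

/-- `f(d,l) := rᵀDAᵀBADr - rᵀDr + vᵀDv`. -/
noncomputable def fval {n m : ℕ} (A : Matrix (Fin n) (Fin m) ℝ) (u d l : Fin m → ℝ) : ℝ :=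
  let D := Matrix.diagonal d
  let r := (u + l) / 2
  let v := (u - l) / 2
  let B := (A * D * Aᵀ)⁻¹
  r ⬝ᵥ (D *ᵥ (Aᵀ *ᵥ (B *ᵥ (A *ᵥ (D *ᵥ r))))) - r ⬝ᵥ (D *ᵥ r) + v ⬝ᵥ (D *ᵥ v)

-- AM-GM for nonneg reals
lemma amgm {n : ℕ} (hn : 0 < n) (μ : Fin n → ℝ) (h0 : ∀ i, 0 ≤ μ i)
    (hs : ∑ i, μ i ≤ n) : ∏ i, μ i ≤ 1 := by
  have hw : ∀ i ∈ (Finset.univ : Finset (Fin n)), (0:ℝ) ≤ 1 / n := fun _ _ => by positivity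
  have hw' : ∑ _i : Fin n, (1:ℝ)/n = 1 := by
    simp [Finset.sum_const, mul_comm]
    field_simp
  have h := Real.geom_mean_le_arith_mean_weighted Finset.univ (fun _ => 1/n) μ hw hw'
    (fun i _ => h0 i)
  have h2 : ∑ i, (1:ℝ)/n * μ i ≤ 1 := by
    rw [← Finset.mul_sum]
    rw [div_mul_eq_mul_div, one_mul, div_le_one (by exact_mod_cast hn)]
    exact hs
  have h3 : (∏ i, μ i ^ ((1:ℝ)/n)) ≤ 1 := le_trans h h2
  have h4 : (∏ i, μ i ^ ((1:ℝ)/n)) = (∏ i, μ i) ^ ((1:ℝ)/n) := by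
    rw [← Real.finset_prod_rpow _ _ (fun i _ => h0 i)]
  have hp : 0 ≤ ∏ i, μ i := Finset.prod_nonneg (fun i _ => h0 i)
  by_contra hc
  push_neg at hc
  have : (1:ℝ) < (∏ i, μ i) ^ ((1:ℝ)/n) := by
    exact (Real.one_lt_rpow_iff_of_pos (lt_trans one_pos hc)).mpr (Or.inl ⟨hc, by positivity⟩)
  rw [← h4] at this
  linarith

-- trace = sum of eigenvalues for real symmetric
lemma trace_eq_sum_eig {n : ℕ} {H : Matrix (Fin n) (Fin n) ℝ} (hH : H.IsHermitian) :
    H.trace = ∑ i, hH.eigenvalues i := by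
  conv_lhs => rw [hH.spectral_theorem, Unitary.conjStarAlgAut_apply]
  rw [Matrix.trace_mul_comm, ← Matrix.mul_assoc]
  have h1 : (star (hH.eigenvectorUnitary : Matrix (Fin n) (Fin n) ℝ)) * (hH.eigenvectorUnitary : Matrix (Fin n) (Fin n) ℝ) = 1 := by
    exact Unitary.coe_star_mul_self hH.eigenvectorUnitary
  rw [h1, Matrix.one_mul]
  simp [Matrix.trace_diagonal]

lemma vol_image {n : ℕ} (P : Matrix (Fin n) (Fin n) ℝ) (c : Fin n → ℝ) (s : Set (Fin n → ℝ)) :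
    volume ((fun x => P *ᵥ x + c) '' s) = ENNReal.ofReal |P.det| * volume s := by
  have h1 : (fun x => P *ᵥ x + c) '' s = (fun y => y + c) '' (Matrix.toLin' P '' s) := by
    rw [Set.image_image]
    rfl
  rw [h1, Set.image_add_right, measure_preimage_add_right,
    Measure.addHaar_image_linearMap, LinearMap.det_toLin']

lemma det_le_one {n : ℕ} (hn : 0 < n) (G : Matrix (Fin n) (Fin n) ℝ)
    (htr : (Gᵀ * G).trace ≤ n) : |G.det| ≤ 1 := by
  have hpsd : (Gᵀ * G).PosSemidef := by
    have := Matrix.posSemidef_conjTranspose_mul_self G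
    exact this
  have hH := hpsd.1
  have hdet : (Gᵀ * G).det = ∏ i, hH.eigenvalues i := by
    have := hH.det_eq_prod_eigenvalues
    simpa using this
  have htr' : ∑ i, hH.eigenvalues i ≤ n := by
    rw [← trace_eq_sum_eig hH]; exact htr
  have hprod : ∏ i, hH.eigenvalues i ≤ 1 :=
    amgm hn _ (fun i => hpsd.eigenvalues_nonneg i) htr'
  have h2 : G.det ^ 2 ≤ 1 := by
    have : (Gᵀ * G).det = G.det ^ 2 := by rw [Matrix.det_mul, Matrix.det_transpose, sq]
    rw [← this, hdet]; exact hprod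
  nlinarith [abs_nonneg G.det, sq_abs G.det]

lemma householder {n : ℕ} (c : Fin (n+1) → ℝ) (hc : c ⬝ᵥ c = 1) :
    ∃ R : Matrix (Fin (n+1)) (Fin (n+1)) ℝ, Rᵀ * R = 1 ∧ R *ᵥ Pi.single 0 1 = c := by
  by_cases hv : c - Pi.single 0 1 = 0
  · refine ⟨1, by simp, ?_⟩
    have h : c = Pi.single 0 1 := by rwa [sub_eq_zero] at hv
    rw [h, Matrix.one_mulVec]
  · set v : Fin (n+1) → ℝ := c - Pi.single 0 1 with hvdef
    set k : ℝ := v ⬝ᵥ v with hk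
    have hknn : 0 ≤ k := by
      rw [hk]; exact Finset.sum_nonneg fun i _ => mul_self_nonneg _
    have hkne : k ≠ 0 := fun h0 => hv (dotProduct_self_eq_zero.mp (hk ▸ h0))
    have hkval : k = 2 - 2 * c 0 := by
      rw [hk, hvdef, sub_dotProduct, dotProduct_sub, dotProduct_sub]
      simp [hc, dotProduct_single, single_dotProduct]
      ring
    set V : Matrix (Fin (n+1)) (Fin (n+1)) ℝ := Matrix.vecMulVec v v with hV
    have hVsymm : Vᵀ = V := by
      ext i j; simp [hV, Matrix.vecMulVec_apply, mul_comm]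
    have hVV : V * V = k • V := by
      ext i j
      simp only [hV, Matrix.mul_apply, Matrix.vecMulVec_apply, Matrix.smul_apply, hk,
        dotProduct, smul_eq_mul]
      rw [Finset.sum_mul]
      apply Finset.sum_congr rfl
      intro x _
      ring
    set R : Matrix (Fin (n+1)) (Fin (n+1)) ℝ := 1 - (2/k) • V with hR
    refine ⟨R, ?_, ?_⟩
    · have hRT : Rᵀ = R := by rw [hR, Matrix.transpose_sub, Matrix.transpose_one,
        Matrix.transpose_smul, hVsymm]
      rw [hRT, hR]
      simp only [Matrix.sub_mul, Matrix.mul_sub, Matrix.one_mul, Matrix.mul_one,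
        Matrix.smul_mul, Matrix.mul_smul, hVV, smul_smul]
      ext i j
      simp only [Matrix.sub_apply, Matrix.smul_apply, Matrix.one_apply, smul_eq_mul,
        Matrix.add_apply]
      field_simp
      ring
    · have hVe : V *ᵥ Pi.single 0 1 = (v 0) • v := by
        ext i
        simp [hV, Matrix.mulVec_single, Matrix.vecMulVec_apply, mul_comm]
      rw [hR, Matrix.sub_mulVec, Matrix.one_mulVec, Matrix.smul_mulVec, hVe]
      have hv0 : v 0 = c 0 - 1 := by simp [hvdef]
      have hcoef : (2/k) • ((v 0) • v) = -v := by
        rw [smul_smul, hv0, hkval]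
        have hne : (2:ℝ) - 2 * c 0 ≠ 0 := by rw [← hkval]; exact hkne
        have h2 : 2 / (2 - 2 * c 0) * (c 0 - 1) = -1 := by
          rw [div_mul_eq_mul_div, div_eq_iff hne]; ring
        rw [h2, neg_one_smul]
      rw [hcoef, hvdef]
      ext i; simp

set_option maxHeartbeats 1000000 in
lemma traceBound {n : ℕ} (G : Matrix (Fin (n+1)) (Fin (n+1)) ℝ) (q : Fin (n+1) → ℝ)
    (a b : ℝ) (ha1 : -1 ≤ a) (ha0 : a < 0) (hb0 : 0 < b) (hb1 : b ≤ 1)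
    (hab : ((n:ℝ)+1) * (a * b) = -1)
    (hK : ∀ u : Fin (n+1) → ℝ, u ⬝ᵥ u = 1 → (u 0 ≤ a ∨ b ≤ u 0) →
      (G *ᵥ u + q) ⬝ᵥ (G *ᵥ u + q) ≤ 1) :
    (Gᵀ * G).trace ≤ (n:ℝ) + 1 := by
  classical
  set col : Fin (n+1) → (Fin (n+1) → ℝ) := fun i => (fun k => G k i) with hcol
  set e : Fin (n+1) → (Fin (n+1) → ℝ) := fun i => Pi.single i 1 with he
  set Q : ℝ := q ⬝ᵥ q with hQ
  have hQnn : 0 ≤ Q := Finset.sum_nonneg fun i _ => mul_self_nonneg _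
  have hcnn : ∀ i, 0 ≤ col i ⬝ᵥ col i := fun i => Finset.sum_nonneg fun k _ => mul_self_nonneg _
  have expand : ∀ (i : Fin (n+1)) (t s : ℝ),
      (G *ᵥ (t • e 0 + s • e i) + q) ⬝ᵥ (G *ᵥ (t • e 0 + s • e i) + q)
      = t^2 * (col 0 ⬝ᵥ col 0) + 2*t*s * (col 0 ⬝ᵥ col i) + s^2 * (col i ⬝ᵥ col i)
        + 2*t*(col 0 ⬝ᵥ q) + 2*s*(col i ⬝ᵥ q) + Q := by
    intro i t s
    have h1 : G *ᵥ (t • e 0 + s • e i) = t • col 0 + s • col i := by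
      rw [Matrix.mulVec_add, Matrix.mulVec_smul, Matrix.mulVec_smul]
      congr 1 <;> · congr 1; ext k; simp [he, hcol, Matrix.mulVec_single]
    rw [h1]
    simp only [add_dotProduct, dotProduct_add, smul_dotProduct,
      dotProduct_smul, smul_eq_mul, hQ]
    rw [dotProduct_comm q (col 0), dotProduct_comm q (col i),
      dotProduct_comm (col i) (col 0)]
    ring
  have unorm : ∀ (i : Fin (n+1)) (t s : ℝ), i ≠ 0 → t^2 + s^2 = 1 →
      (t • e 0 + s • e i) ⬝ᵥ (t • e 0 + s • e i) = 1 := by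
    intro i t s hi hts
    simp only [add_dotProduct, dotProduct_add, smul_dotProduct,
      dotProduct_smul, smul_eq_mul, he, dotProduct_single,
      single_dotProduct]
    simp [Pi.single_apply, hi, Ne.symm hi]
    nlinarith [hts]
  have uat : ∀ (i : Fin (n+1)) (t s : ℝ), i ≠ 0 → (t • e 0 + s • e i) 0 = t := by
    intro i t s hi
    simp [he, Pi.single_apply, Ne.symm hi]
  -- pole inequality
  have hpole : (col 0 ⬝ᵥ col 0) + Q ≤ 1 := by
    have hn1 : ((1:ℝ) • e 0 + (0:ℝ) • e 0) ⬝ᵥ ((1:ℝ) • e 0 + (0:ℝ) • e 0) = 1 := by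
      simp [he, single_dotProduct, Pi.single_apply]
    have hn2 : ((-1:ℝ) • e 0 + (0:ℝ) • e 0) ⬝ᵥ ((-1:ℝ) • e 0 + (0:ℝ) • e 0) = 1 := by
      simp [he, single_dotProduct, Pi.single_apply]
    have hat1 : ((1:ℝ) • e 0 + (0:ℝ) • e 0) 0 = 1 := by simp [he]
    have hat2 : ((-1:ℝ) • e 0 + (0:ℝ) • e 0) 0 = -1 := by simp [he]
    have I1 := hK _ hn1 (Or.inr (by rw [hat1]; exact hb1))
    have I2 := hK _ hn2 (Or.inl (by rw [hat2]; exact ha1))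
    rw [expand 0 1 0] at I1
    rw [expand 0 (-1) 0] at I2
    linarith [I1, I2]
  -- per-index inequality
  have key : ∀ i : Fin (n+1), i ≠ 0 →
      (col 0 ⬝ᵥ col 0) + (n:ℝ) * (col i ⬝ᵥ col i) + ((n:ℝ)+1) * Q ≤ (n:ℝ) + 1 := by
    intro i hi
    set sa : ℝ := Real.sqrt (1 - a^2) with hsadef
    set sb : ℝ := Real.sqrt (1 - b^2) with hsbdef
    have hsa : sa^2 = 1 - a^2 := Real.sq_sqrt (by nlinarith)
    have hsb : sb^2 = 1 - b^2 := Real.sq_sqrt (by nlinarith)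
    have I1 := hK _ (unorm i a sa hi (by linarith)) (Or.inl (by rw [uat i a sa hi]))
    have I2 := hK _ (unorm i a (-sa) hi (by rw [neg_pow]; simp; linarith))
      (Or.inl (by rw [uat i a (-sa) hi]))
    have I3 := hK _ (unorm i b sb hi (by linarith)) (Or.inr (by rw [uat i b sb hi]))
    have I4 := hK _ (unorm i b (-sb) hi (by rw [neg_pow]; simp; linarith))
      (Or.inr (by rw [uat i b (-sb) hi]))
    rw [expand i a sa] at I1
    rw [expand i a (-sa)] at I2
    rw [expand i b sb] at I3
    rw [expand i b (-sb)] at I4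
    have hfa : sa^2 * (col i ⬝ᵥ col i) = (1-a^2) * (col i ⬝ᵥ col i) := by rw [hsa]
    have hfb : sb^2 * (col i ⬝ᵥ col i) = (1-b^2) * (col i ⬝ᵥ col i) := by rw [hsb]
    have Ja : a^2*(col 0 ⬝ᵥ col 0) + (1-a^2)*(col i ⬝ᵥ col i) + 2*a*(col 0 ⬝ᵥ q) + Q ≤ 1 := by
      linarith [I1, I2, hfa]
    have Jb : b^2*(col 0 ⬝ᵥ col 0) + (1-b^2)*(col i ⬝ᵥ col i) + 2*b*(col 0 ⬝ᵥ q) + Q ≤ 1 := by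
      linarith [I3, I4, hfb]
    have hba : (0:ℝ) < b - a := by linarith
    have h1 := mul_le_mul_of_nonneg_left Ja hb0.le
    have h2 := mul_le_mul_of_nonneg_left Jb (by linarith : (0:ℝ) ≤ -a)
    have hnn : (0:ℝ) ≤ (n:ℝ) + 1 := by positivity
    have h1n := mul_le_mul_of_nonneg_left h1 hnn
    have h2n := mul_le_mul_of_nonneg_left h2 hnn
    have E1 : ((n:ℝ)+1)*(a*b)*(a*(col 0 ⬝ᵥ col 0)) = -(a*(col 0 ⬝ᵥ col 0)) := by
      rw [hab]; ring
    have E2 : ((n:ℝ)+1)*(a*b)*(b*(col 0 ⬝ᵥ col 0)) = -(b*(col 0 ⬝ᵥ col 0)) := by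
      rw [hab]; ring
    have E3 : ((n:ℝ)+1)*(a*b)*((a-b)*(col i ⬝ᵥ col i)) = -((a-b)*(col i ⬝ᵥ col i)) := by
      rw [hab]; ring
    have key2 : (b - a) * ((col 0 ⬝ᵥ col 0) + (n:ℝ) * (col i ⬝ᵥ col i) + ((n:ℝ)+1) * Q)
        ≤ (b - a) * ((n:ℝ) + 1) := by
      linarith [h1n, h2n, E1, E2, E3]
    exact le_of_mul_le_mul_left key2 hba
  -- assemble
  have htr : (Gᵀ * G).trace = ∑ i, col i ⬝ᵥ col i := by
    simp [Matrix.trace, Matrix.diag, Matrix.mul_apply, dotProduct, hcol]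
  rw [htr]
  rw [← Finset.add_sum_erase Finset.univ _ (Finset.mem_univ (0 : Fin (n+1)))]
  rcases Nat.eq_zero_or_pos n with hn | hn
  · subst hn
    have : (Finset.univ.erase (0 : Fin 1)) = ∅ := by decide
    rw [this]
    simp only [Finset.sum_empty, add_zero, Nat.cast_zero]
    linarith [hpole, hQnn]
  · have hB : ∀ i ∈ Finset.univ.erase (0 : Fin (n+1)),
        col i ⬝ᵥ col i ≤ (((n:ℝ)+1) - ((n:ℝ)+1)*Q - (col 0 ⬝ᵥ col 0)) / n := by
      intro i hi
      have hi0 : i ≠ 0 := Finset.ne_of_mem_erase hi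
      rw [le_div_iff₀ (by exact_mod_cast hn)]
      have := key i hi0
      linarith
    have hsum := Finset.sum_le_card_nsmul _ _ _ hB
    have hcard : (Finset.univ.erase (0 : Fin (n+1))).card = n := by
      rw [Finset.card_erase_of_mem (Finset.mem_univ _)]
      simp
    rw [hcard] at hsum
    have hnR : (0:ℝ) < n := by exact_mod_cast hn
    have : (n : ℝ) * ((((n:ℝ)+1) - ((n:ℝ)+1)*Q - (col 0 ⬝ᵥ col 0)) / n)
        = ((n:ℝ)+1) - ((n:ℝ)+1)*Q - (col 0 ⬝ᵥ col 0) := by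
      field_simp
    rw [nsmul_eq_mul] at hsum
    rw [this] at hsum
    have hQ1 : 0 ≤ ((n:ℝ)+1)*Q := by positivity
    linarith [hsum, hQ1]

set_option maxHeartbeats 1000000 in
/-- first case of Theorem 5.2 of the paper. If `-1 ≤ α ≤ β ≤ 1`
(not both extreme) and `1 + nαβ ≥ 0`, then `E` itself is a minimum-volume ellipsoid
containing the two end pieces `Ē_{αβ}` of `E` cut off by the slab
`α γ_j ≤ -a_jᵀ(y - ȳ) ≤ β γ_j`. -/
theorem stmt_16 {n m : ℕ} (A : Matrix (Fin n) (Fin m) ℝ) (u l d : Fin m → ℝ)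
    (hA : ∀ i : Fin m, (fun k => A k i) ≠ 0)
    (hd : 0 ≤ d)
    (hpd : (A * Matrix.diagonal d * Aᵀ).PosDef)
    (ybar : Fin n → ℝ)
    (hybar : ybar =
      (A * Matrix.diagonal d * Aᵀ)⁻¹ *ᵥ (A *ᵥ (Matrix.diagonal d *ᵥ ((u + l) / 2))))
    (hf : fval A u d l = 1)
    (j : Fin m) (γj : ℝ)
    (hγj : γj = Real.sqrt
      ((fun k => A k j) ⬝ᵥ ((A * Matrix.diagonal d * Aᵀ)⁻¹ *ᵥ (fun k => A k j))))
    (α β : ℝ) (hα : -1 ≤ α) (hαβ : α ≤ β) (hβ : β ≤ 1)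
    (hstrict : -1 < α ∨ β < 1)
    (hnαβ : 0 ≤ 1 + (n : ℝ) * α * β)
    (E Ebar : Set (Fin n → ℝ))
    (hE : E = {y : Fin n → ℝ |
      (y - ybar) ⬝ᵥ ((A * Matrix.diagonal d * Aᵀ) *ᵥ (y - ybar)) ≤ 1})
    (hEbar : Ebar = {y ∈ E |
      -((fun k => A k j) ⬝ᵥ y) ≤ -((fun k => A k j) ⬝ᵥ ybar) + α * γj ∨
      -((fun k => A k j) ⬝ᵥ y) ≥ -((fun k => A k j) ⬝ᵥ ybar) + β * γj}) :
    ∀ F : Set (Fin n → ℝ), IsEllipsoid F → Ebar ⊆ F → volume E ≤ volume F := by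
  intro F hF hsub
  obtain ⟨N, z, hNunit, hFeq⟩ := hF
  cases n with
  | zero =>
    have hFne : F.Nonempty := by
      rw [hFeq]
      exact ⟨N *ᵥ 0 + z, ⟨0, by simp [dotProduct], rfl⟩⟩
    obtain ⟨x0, hx0⟩ := hFne
    refine measure_mono fun y hy => ?_
    have : y = x0 := Subsingleton.elim y x0
    rwa [this]
  | succ nn =>
    classical
    set M : Matrix (Fin (nn+1)) (Fin (nn+1)) ℝ := A * Matrix.diagonal d * Aᵀ with hM
    set aj : Fin (nn+1) → ℝ := fun k => A k j with haj
    -- square root of M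
    have hpsd : M.PosSemidef := hpd.posSemidef
    open scoped MatrixOrder in
    set W : Matrix (Fin (nn+1)) (Fin (nn+1)) ℝ := CFC.sqrt M with hW
    have hWW : W * W = M := by
      open scoped MatrixOrder in exact CFC.sqrt_mul_sqrt_self M hpsd.nonneg
    have hWherm : Wᵀ = W := by
      open scoped MatrixOrder in exact (CFC.sqrt_nonneg M).posSemidef.1
    have hdetM : 0 < M.det := hpd.det_pos
    have hdetW : W.det ≠ 0 := by
      intro h0
      rw [← hWW, Matrix.det_mul, h0, mul_zero] at hdetM
      exact lt_irrefl _ hdetM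
    have hWdu : IsUnit W.det := isUnit_iff_ne_zero.mpr hdetW
    have hWinv : W⁻¹ * W = 1 := Matrix.nonsing_inv_mul W hWdu
    have hWvin : W * W⁻¹ = 1 := Matrix.mul_nonsing_inv W hWdu
    have hWiherm : (W⁻¹)ᵀ = W⁻¹ := by rw [Matrix.transpose_nonsing_inv, hWherm]
    have hMinv : M⁻¹ = W⁻¹ * W⁻¹ := by rw [← hWW, Matrix.mul_inv_rev]
    -- gamma
    have hquadpos : 0 < aj ⬝ᵥ (M⁻¹ *ᵥ aj) := by
      have h := hpd.inv.re_dotProduct_pos (x := aj) (hA j)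
      simpa using h
    have hγpos : 0 < γj := by rw [hγj]; exact Real.sqrt_pos.mpr hquadpos
    have hγsq : γj^2 = aj ⬝ᵥ (M⁻¹ *ᵥ aj) := by
      rw [hγj]; exact Real.sq_sqrt hquadpos.le
    -- the unit vector c
    set c : Fin (nn+1) → ℝ := (-(γj⁻¹)) • (W⁻¹ *ᵥ aj) with hc
    have hWia : (W⁻¹ *ᵥ aj) ⬝ᵥ (W⁻¹ *ᵥ aj) = aj ⬝ᵥ (M⁻¹ *ᵥ aj) := by
      have hvm : aj ᵥ* W⁻¹ = W⁻¹ *ᵥ aj := by rw [← Matrix.mulVec_transpose, hWiherm]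
      conv_rhs => rw [hMinv, ← Matrix.mulVec_mulVec, dotProduct_mulVec, hvm]
    have hcc : c ⬝ᵥ c = 1 := by
      rw [hc, smul_dotProduct, dotProduct_smul, smul_eq_mul, smul_eq_mul, hWia,
        ← hγsq]
      field_simp
    obtain ⟨R, hRR, hRe⟩ := householder c hcc
    have hRvin : R * Rᵀ = 1 := mul_eq_one_comm.mp hRR
    have hdetR : R.det * R.det = 1 := by
      have h := congrArg Matrix.det hRR
      rwa [Matrix.det_mul, Matrix.det_transpose, Matrix.det_one] at h
    have hdetRne : R.det ≠ 0 := by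
      intro h0; rw [h0, mul_zero] at hdetR; exact zero_ne_one hdetR
    set P : Matrix (Fin (nn+1)) (Fin (nn+1)) ℝ := W⁻¹ * R with hP
    have hPT : Pᵀ = Rᵀ * W⁻¹ := by rw [hP, Matrix.transpose_mul, hWiherm]
    have hPMP : Pᵀ * M * P = 1 := by
      rw [hPT, hP, ← hWW]
      simp only [← Matrix.mul_assoc]
      rw [Matrix.mul_assoc Rᵀ W⁻¹ W, hWinv, Matrix.mul_one]
      rw [Matrix.mul_assoc Rᵀ W W⁻¹, hWvin, Matrix.mul_one]
      exact hRR
    have hquad : ∀ x : Fin (nn+1) → ℝ, (P *ᵥ x) ⬝ᵥ (M *ᵥ (P *ᵥ x)) = x ⬝ᵥ x := by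
      intro x
      rw [Matrix.mulVec_mulVec, dotProduct_mulVec, Matrix.vecMul_mulVec,
        ← Matrix.mul_assoc, hPMP, Matrix.vecMul_one]
    have hdetP : P.det ≠ 0 := by
      rw [hP, Matrix.det_mul, Matrix.det_nonsing_inv]
      refine mul_ne_zero ?_ hdetRne
      rw [Ring.inverse_eq_inv']
      exact inv_ne_zero hdetW
    have hPdu : IsUnit P.det := isUnit_iff_ne_zero.mpr hdetP
    have hPinv : P * P⁻¹ = 1 := Matrix.mul_nonsing_inv P hPdu
    have hPvin : P⁻¹ * P = 1 := Matrix.nonsing_inv_mul P hPdu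
    -- E as the image of the unit ball
    have hEimg : E = (fun x => P *ᵥ x + ybar) '' {x : Fin (nn+1) → ℝ | x ⬝ᵥ x ≤ 1} := by
      rw [hE]
      ext y
      constructor
      · intro hy
        refine ⟨P⁻¹ *ᵥ (y - ybar), ?_, ?_⟩
        · have hyx : P *ᵥ (P⁻¹ *ᵥ (y - ybar)) = y - ybar := by
            rw [Matrix.mulVec_mulVec, hPinv, Matrix.one_mulVec]
          have := hquad (P⁻¹ *ᵥ (y - ybar))
          rw [hyx] at this
          rw [Set.mem_setOf_eq, ← this]
          exact hy
        · have hyx : P *ᵥ (P⁻¹ *ᵥ (y - ybar)) = y - ybar := by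
            rw [Matrix.mulVec_mulVec, hPinv, Matrix.one_mulVec]
          show P *ᵥ (P⁻¹ *ᵥ (y - ybar)) + ybar = y
          rw [hyx]; abel
      · rintro ⟨x, hx, rfl⟩
        have h1 : P *ᵥ x + ybar - ybar = P *ᵥ x := by abel
        rw [Set.mem_setOf_eq, h1, hquad x]
        exact hx
    -- membership of contact points in Ebar
    have hajP : ∀ v : Fin (nn+1) → ℝ, aj ⬝ᵥ (P *ᵥ v) = -(γj * (v 0)) := by
      intro v
      have h1 : aj ⬝ᵥ (P *ᵥ v) = (W⁻¹ *ᵥ aj) ⬝ᵥ (R *ᵥ v) := by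
        rw [hP, ← Matrix.mulVec_mulVec, dotProduct_mulVec]
        have hvm : aj ᵥ* W⁻¹ = W⁻¹ *ᵥ aj := by rw [← Matrix.mulVec_transpose, hWiherm]
        rw [hvm]
      have h2 : W⁻¹ *ᵥ aj = (-γj) • c := by
        rw [hc, smul_smul]
        have : -γj * -γj⁻¹ = 1 := by
          rw [neg_mul_neg, mul_inv_cancel₀ hγpos.ne']
        rw [this, one_smul]
      have h3 : c ⬝ᵥ (R *ᵥ v) = v 0 := by
        have hRc : Rᵀ *ᵥ c = Pi.single 0 1 := by
          rw [← hRe, Matrix.mulVec_mulVec, hRR, Matrix.one_mulVec]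
        rw [dotProduct_mulVec]
        have hvr : c ᵥ* R = Rᵀ *ᵥ c := (Matrix.mulVec_transpose R c).symm
        rw [hvr, hRc, single_dotProduct, one_mul]
      rw [h1, h2, smul_dotProduct, h3, smul_eq_mul]
      ring
    -- choice of latitudes
    set aa : ℝ := min α (-(1/((nn:ℝ)+1))) with haadef
    have hnnpos : (0:ℝ) < (nn:ℝ)+1 := by positivity
    have haan : aa ≤ -(1/((nn:ℝ)+1)) := min_le_right _ _
    have haaα : aa ≤ α := min_le_left _ _
    have haa0 : aa < 0 := lt_of_le_of_lt haan (neg_lt_zero.mpr (by positivity))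
    have haa1 : -1 ≤ aa := by
      refine le_min hα ?_
      rw [neg_le_neg_iff]
      rw [div_le_one hnnpos]
      linarith
    set bb : ℝ := -(1/(((nn:ℝ)+1)*aa)) with hbbdef0
    have htne : ((nn:ℝ)+1)*aa ≠ 0 := mul_ne_zero hnnpos.ne' haa0.ne
    have hbbdef : bb * (((nn:ℝ)+1)*aa) = -1 := by
      rw [hbbdef0, neg_mul, one_div, inv_mul_cancel₀ htne]
    have ht : ((nn:ℝ)+1)*aa ≤ -1 := by
      have h := mul_le_mul_of_nonneg_left haan hnnpos.le
      rw [mul_neg, mul_one_div, div_self hnnpos.ne'] at h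
      exact h
    have hbb0 : 0 < bb := by nlinarith [hbbdef, ht]
    have hbb1 : bb ≤ 1 := by nlinarith [hbbdef, ht, hbb0]
    have hnαβ' : 0 ≤ 1 + ((nn:ℝ)+1) * α * β := by
      have := hnαβ; push_cast at this ⊢; linarith
    have hbbβ : β ≤ bb := by
      rcases le_or_gt α (-(1/((nn:ℝ)+1))) with h | h
      · have haaeq : aa = α := min_eq_left h
        rw [haaeq] at hbbdef ht
        nlinarith [hbbdef, ht, hnαβ']
      · have haaeq : aa = -(1/((nn:ℝ)+1)) := min_eq_right h.le
        have htt : ((nn:ℝ)+1)*aa = -1 := by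
          rw [haaeq, mul_neg, mul_one_div, div_self hnnpos.ne']
        rw [htt] at hbbdef
        have : bb = 1 := by linarith [hbbdef]
        rw [this]; exact hβ
    have hab : ((nn:ℝ)+1) * (aa * bb) = -1 := by
      have := hbbdef; ring_nf at this ⊢; linarith
    -- contact points lie in Ebar
    have hEbarmem : ∀ v : Fin (nn+1) → ℝ, v ⬝ᵥ v = 1 → (v 0 ≤ aa ∨ bb ≤ v 0) →
        (P *ᵥ v + ybar) ∈ Ebar := by
      intro v hv1 hv2
      rw [hEbar]
      constructor
      · rw [hE, Set.mem_setOf_eq]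
        have h1 : P *ᵥ v + ybar - ybar = P *ᵥ v := by abel
        rw [h1, hquad v, hv1]
      · have hdp : aj ⬝ᵥ (P *ᵥ v + ybar) = -(γj * (v 0)) + aj ⬝ᵥ ybar := by
          rw [dotProduct_add, hajP v]
        rcases hv2 with h | h
        · left
          rw [hdp]
          have : γj * (v 0) ≤ α * γj := by
            have h2 : v 0 ≤ α := le_trans h haaα
            nlinarith [hγpos, h2]
          linarith
        · right
          rw [hdp]
          have : β * γj ≤ γj * (v 0) := by
            have h2 : β ≤ v 0 := le_trans hbbβ h
            nlinarith [hγpos, h2]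
          linarith
    -- invertibility of N
    have hNdu : IsUnit N.det := (Matrix.isUnit_iff_isUnit_det N).mp hNunit
    have hNdet : N.det ≠ 0 := hNdu.ne_zero
    have hNinv : N⁻¹ * N = 1 := Matrix.nonsing_inv_mul N hNdu
    -- the key quadratic bound
    set Gm : Matrix (Fin (nn+1)) (Fin (nn+1)) ℝ := N⁻¹ * P with hGm
    set qv : Fin (nn+1) → ℝ := N⁻¹ *ᵥ (ybar - z) with hqv
    have hK : ∀ v : Fin (nn+1) → ℝ, v ⬝ᵥ v = 1 → (v 0 ≤ aa ∨ bb ≤ v 0) →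
        (Gm *ᵥ v + qv) ⬝ᵥ (Gm *ᵥ v + qv) ≤ 1 := by
      intro v hv1 hv2
      have hmem := hsub (hEbarmem v hv1 hv2)
      rw [hFeq] at hmem
      obtain ⟨x, hx, hxy⟩ := hmem
      have hxval : Gm *ᵥ v + qv = x := by
        have h1 : N *ᵥ x = P *ᵥ v + ybar - z := by
          rw [← hxy, add_sub_cancel_right]
        have h2 : N⁻¹ *ᵥ (N *ᵥ x) = x := by
          rw [Matrix.mulVec_mulVec, hNinv, Matrix.one_mulVec]
        rw [← h2, h1, hGm, hqv, ← Matrix.mulVec_mulVec]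
        rw [show P *ᵥ v + ybar - z = (P *ᵥ v) + (ybar - z) by abel]
        rw [Matrix.mulVec_add]
      rw [hxval]
      exact hx
    -- trace and determinant bounds
    have htr := traceBound Gm qv aa bb haa1 haa0 hbb0 hbb1 hab hK
    have hdet : |Gm.det| ≤ 1 := by
      refine det_le_one (Nat.succ_pos nn) Gm ?_
      push_cast
      exact htr
    have hGmdet : Gm.det = N⁻¹.det * P.det := by rw [hGm, Matrix.det_mul]
    have hNidet : N⁻¹.det = N.det⁻¹ := by
      rw [Matrix.det_nonsing_inv, Ring.inverse_eq_inv']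
    have hPN : |P.det| ≤ |N.det| := by
      rw [hGmdet, hNidet, abs_mul, abs_inv] at hdet
      have hNpos : 0 < |N.det| := abs_pos.mpr hNdet
      rw [inv_mul_le_iff₀ hNpos] at hdet
      simpa using hdet
    -- conclude via volumes
    rw [hEimg, hFeq, vol_image, vol_image]
    exact mul_le_mul_of_nonneg_right (ENNReal.ofReal_le_ofReal hPN) zero_le
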